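/- Let P ≥ 1, let f_1, …, f_P ∈ ℝ satisfy f_i − f_j ∉ ℤ for all i ≠ j, and let α_1, …, α_P ∈ ℂ. For each M ≥ 1 define the channel vector h_M = Σ_{p=1}^{P} α_p · a_M(f_p) ∈ ℂ^M. Then ‖h_M‖² / M → Σ_{p=1}^{P} |α_p|² as M → ∞. -/

import Mathlib

open scoped Real
open Finset Filter

/-- The steering vector `a_M(f) ∈ ℂ^M`, whose `m`-th entry is `e^{-2πi m f}`. -/
noncomputable def steer (M : ℕ) (f : ℝ) : EuclideanSpace ℂ (Fin M) :=
  WithLp.toLp 2 fun m => Complex.exp (-(2 * (π : ℂ) * Complex.I * ((m : ℕ) : ℂ) * (f : ℂ)))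

noncomputable def wexp (x : ℝ) : ℂ := Complex.exp (2 * (π : ℂ) * Complex.I * (x : ℂ))

lemma wexp_abs (x : ℝ) : ‖wexp x‖ = 1 := by
  have h : (2 * (π : ℂ) * Complex.I * (x : ℂ)) = ((2 * π * x : ℝ) : ℂ) * Complex.I := by
    push_cast; ring
  rw [wexp, h, Complex.norm_exp_ofReal_mul_I]

lemma wexp_ne_one {x : ℝ} (hx : ∀ k : ℤ, x ≠ (k : ℝ)) : wexp x ≠ 1 := by
  intro h
  rw [wexp, Complex.exp_eq_one_iff] at h
  obtain ⟨n, hn⟩ := h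
  apply hx n
  have h2 : (2 * (π : ℂ) * Complex.I) ≠ 0 := by
    simp [Real.pi_ne_zero, Complex.I_ne_zero, Complex.ofReal_ne_zero]
  have hx2 : (x : ℂ) = (n : ℂ) := by
    have : (2 * (π : ℂ) * Complex.I) * (x : ℂ) = (2 * (π : ℂ) * Complex.I) * (n : ℂ) := by
      rw [hn]; ring
    exact mul_left_cancel₀ h2 this
  exact_mod_cast hx2

lemma steer_inner (M : ℕ) (g h : ℝ) :
    (inner ℂ (steer M g) (steer M h) : ℂ) = ∑ m ∈ Finset.range M, (wexp (g - h)) ^ m := by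
  rw [PiLp.inner_apply]
  rw [← Fin.sum_univ_eq_sum_range (fun m => (wexp (g - h)) ^ m) M]
  congr 1
  funext m
  simp only [steer, PiLp.toLp_apply, RCLike.inner_apply, wexp]
  rw [← Complex.exp_conj, ← Complex.exp_nat_mul, ← Complex.exp_add]
  congr 1
  simp only [map_neg, map_mul, Complex.conj_I, Complex.conj_ofReal, Complex.conj_natCast,
    map_ofNat]
  push_cast
  ring

lemma re_div_nat (z : ℂ) (n : ℕ) : (z / (n : ℂ)).re = z.re / (n : ℝ) := by
  rcases Nat.eq_zero_or_pos n with h | h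
  · simp [h]
  · have hn : (n : ℝ) ≠ 0 := Nat.cast_ne_zero.mpr h.ne'
    rw [Complex.div_re]
    simp only [Complex.natCast_re, Complex.natCast_im, mul_zero, zero_div, add_zero,
      Complex.normSq_natCast]
    field_simp

/-- for `P ≥ 1`, frequencies `f_1, …, f_P` with `f_i − f_j ∉ ℤ` for `i ≠ j`,
and gains `α_1, …, α_P ∈ ℂ`, the channel `h_M = Σ_p α_p a_M(f_p)` satisfies
`‖h_M‖² / M → Σ_p |α_p|²` as `M → ∞`. -/
theorem stmt4 (P : ℕ) (hP : 1 ≤ P) (f : Fin P → ℝ)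
    (hf : ∀ i j : Fin P, i ≠ j → ∀ k : ℤ, f i - f j ≠ (k : ℝ))
    (α : Fin P → ℂ) :
    Filter.Tendsto
      (fun M : ℕ => ‖∑ p, α p • steer M (f p)‖ ^ 2 / (M : ℝ))
      Filter.atTop (nhds (∑ p, ‖α p‖ ^ 2)) := by
  classical
  have key : Tendsto (fun M : ℕ => ∑ q : Fin P, ∑ p : Fin P,
      (starRingEnd ℂ) (α q) * α p * (∑ m ∈ Finset.range M, (wexp (f q - f p)) ^ m) / (M : ℂ))
      atTop (nhds (∑ q : Fin P, ∑ p : Fin P,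
        if q = p then ((‖α p‖ ^ 2 : ℝ) : ℂ) else 0)) := by
    apply tendsto_finset_sum; intro q _
    apply tendsto_finset_sum; intro p _
    by_cases hqp : q = p
    · subst hqp
      rw [if_pos rfl]
      apply Tendsto.congr' _ tendsto_const_nhds
      filter_upwards [eventually_ge_atTop 1] with M hM
      have hw : wexp (f q - f q) = 1 := by simp [wexp]
      have hM0 : (M : ℂ) ≠ 0 := Nat.cast_ne_zero.mpr (by omega)
      rw [hw]
      simp only [one_pow, Finset.sum_const, Finset.card_range, nsmul_eq_mul, mul_one]
      rw [mul_div_assoc, div_self hM0, mul_one, RCLike.conj_mul]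
      norm_cast
    · rw [if_neg hqp]
      have hw1 : wexp (f q - f p) ≠ 1 := wexp_ne_one (hf q p hqp)
      set w := wexp (f q - f p) with hwdef
      have habs : ‖w‖ = 1 := wexp_abs _
      have hpos : 0 < ‖w - 1‖ := norm_pos_iff.mpr (sub_ne_zero.mpr hw1)
      have hGbound : ∀ M : ℕ, ‖∑ m ∈ Finset.range M, w ^ m‖
          ≤ 2 / ‖w - 1‖ := by
        intro M
        rw [geom_sum_eq hw1, norm_div]
        have hnum : ‖w ^ M - 1‖ ≤ 2 := by
          calc ‖w ^ M - 1‖ ≤ ‖w ^ M‖ + ‖(1 : ℂ)‖ :=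
                norm_sub_le _ _
          _ = 2 := by rw [norm_pow, habs, one_pow, norm_one]; norm_num
        exact div_le_div_of_nonneg_right hnum hpos.le
      have hC : Tendsto (fun M : ℕ =>
          ‖α q‖ * ‖α p‖ * (2 / ‖w - 1‖) / (M : ℝ))
          atTop (nhds 0) := tendsto_const_div_atTop_nhds_zero_nat _
      apply squeeze_zero_norm _ hC
      intro M
      rw [norm_div]
      simp only [norm_mul, Complex.norm_conj, Complex.norm_natCast]
      gcongr
      exact hGbound M
  have key2 := (Complex.continuous_re.tendsto _).comp key
  have hlim : (∑ q : Fin P, ∑ p : Fin P,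
      if q = p then ((‖α p‖ ^ 2 : ℝ) : ℂ) else 0).re
      = ∑ p, ‖α p‖ ^ 2 := by
    have : (∑ q : Fin P, ∑ p : Fin P,
        if q = p then ((‖α p‖ ^ 2 : ℝ) : ℂ) else 0)
        = ∑ p : Fin P, ((‖α p‖ ^ 2 : ℝ) : ℂ) := by
      simp [Finset.sum_ite_eq]
    rw [this, Complex.re_sum]
    norm_cast
  have heq : ∀ M : ℕ, ‖∑ p, α p • steer M (f p)‖ ^ 2 / (M : ℝ)
      = (∑ q : Fin P, ∑ p : Fin P,
          (starRingEnd ℂ) (α q) * α p * (∑ m ∈ Finset.range M, (wexp (f q - f p)) ^ m)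
            / (M : ℂ)).re := by
    intro M
    have h1 : (inner ℂ (∑ p, α p • steer M (f p)) (∑ p, α p • steer M (f p)) : ℂ)
        = ∑ q : Fin P, ∑ p : Fin P,
          (starRingEnd ℂ) (α q) * α p * (∑ m ∈ Finset.range M, (wexp (f q - f p)) ^ m) := by
      rw [sum_inner]
      refine Finset.sum_congr rfl fun q _ => ?_
      rw [inner_sum]
      refine Finset.sum_congr rfl fun p _ => ?_
      rw [inner_smul_left, inner_smul_right, steer_inner]
      ring
    have h2 : ‖∑ p, α p • steer M (f p)‖ ^ 2
        = (inner ℂ (∑ p, α p • steer M (f p)) (∑ p, α p • steer M (f p)) : ℂ).re := by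
      rw [InnerProductSpace.norm_sq_eq_re_inner (𝕜 := ℂ)]
      rfl
    rw [h2, h1]
    simp only [← Finset.sum_div]
    rw [re_div_nat]
  refine Tendsto.congr (fun M => (heq M).symm) ?_
  rwa [hlim] at key2
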